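/- arXiv:1410.0991 — 2 statements merged into one kernel-verified Lean document; each statement's English description precedes it below -/
import Mathlib

section
/- Pathwise uniqueness holds for the non-Gaussian Ornstein–Uhlenbeck integral equation: if Z : [0,T] → ℝ is Borel measurable, Lebesgue-integrable on [0,T], and satisfies Z(t) = y − λ∫₀ᵗ Z(s) ds + (ℓ(t) − ℓ(0)) for every t ∈ [0,T], then Z(t) = Y(t) for every t ∈ [0,T], where Y(t) = y e^{−λt} + ∫_{(0,t]} e^{−λ(t−s)} dμ_ℓ(s). -/
open MeasureTheory Set

private lemma int_exp_helper (c a b : ℝ) (hc : c ≠ 0) :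
    ∫ s in a..b, Real.exp (c * s) = (Real.exp (c * b) - Real.exp (c * a)) / c := by
  have hderiv : ∀ x : ℝ, HasDerivAt (fun s => Real.exp (c * s) / c) (Real.exp (c * x)) x := by
    intro x
    have h1 : HasDerivAt (fun s : ℝ => c * s) c x := by
      simpa using (hasDerivAt_id x).const_mul c
    have h2 := (Real.hasDerivAt_exp (c * x)).comp x h1
    have h3 := h2.div_const c
    simpa [mul_div_cancel_right₀ _ hc] using h3
  rw [intervalIntegral.integral_eq_sub_of_hasDerivAt (fun x _ => hderiv x)
    ((Real.continuous_exp.comp (continuous_const.mul continuous_id)).intervalIntegrable a b)]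
  ring

private lemma gronwall_zero (lam T : ℝ) (D : ℝ → ℝ)
    (hD : IntegrableOn D (Icc (0:ℝ) T))
    (hEq : ∀ t ∈ Icc (0:ℝ) T, D t = -lam * ∫ s in Ioc (0:ℝ) t, D s) :
    ∀ t ∈ Icc (0:ℝ) T, D t = 0 := by
  set D' : ℝ → ℝ := (Icc (0:ℝ) T).indicator D with hD'def
  have hD'int : Integrable D' := (integrable_indicator_iff measurableSet_Icc).2 hD
  set F : ℝ → ℝ := fun t => ∫ s in (0:ℝ)..t, D' s with hFdef
  have hFcont : Continuous F := hD'int.continuous_primitive 0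
  have key : ∀ t ∈ Icc (0:ℝ) T, (∫ s in Ioc (0:ℝ) t, D s) = F t := by
    intro t ht
    rw [hFdef]
    simp only
    rw [intervalIntegral.integral_of_le ht.1]
    refine setIntegral_congr_fun measurableSet_Ioc (fun s hs => ?_)
    exact (Set.indicator_of_mem (Set.mem_Icc.2 ⟨le_of_lt hs.1, hs.2.trans ht.2⟩) D).symm
  have hDF : ∀ t ∈ Icc (0:ℝ) T, D t = -lam * F t := by
    intro t ht
    rw [hEq t ht, key t ht]
  set G : ℝ → ℝ := fun t => ∫ s in (0:ℝ)..t, -lam * F s with hGdef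
  have hGderiv : ∀ t : ℝ, HasDerivAt G (-lam * F t) t := fun t =>
    ((continuous_const.mul hFcont).integral_hasStrictDerivAt 0 t).hasDerivAt
  have hGcont : Continuous G :=
    intervalIntegral.continuous_primitive
      (fun a b => (continuous_const.mul hFcont).intervalIntegrable a b) 0
  have hFG : ∀ t ∈ Icc (0:ℝ) T, F t = G t := by
    intro t ht
    rw [hFdef, hGdef]
    simp only
    rw [intervalIntegral.integral_of_le ht.1, intervalIntegral.integral_of_le ht.1]
    refine setIntegral_congr_fun measurableSet_Ioc (fun s hs => ?_)
    have hsT : s ∈ Icc (0:ℝ) T := ⟨le_of_lt hs.1, hs.2.trans ht.2⟩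
    have h : D' s = D s := Set.indicator_of_mem hsT D
    rw [h, hDF s hsT]
  set H : ℝ → ℝ := fun t => Real.exp (lam * t) * G t with hHdef
  have hHderiv : ∀ t ∈ Icc (0:ℝ) T, HasDerivAt H 0 t := by
    intro t ht
    have h1 : HasDerivAt (fun s : ℝ => Real.exp (lam * s)) (Real.exp (lam * t) * lam) t := by
      have := (Real.hasDerivAt_exp (lam * t)).comp t
        (by simpa using (hasDerivAt_id t).const_mul lam : HasDerivAt (fun s : ℝ => lam * s) lam t)
      exact this
    have h2 := h1.mul (hGderiv t)
    have : Real.exp (lam * t) * lam * G t + Real.exp (lam * t) * (-lam * F t) = 0 := by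
      rw [hFG t ht]; ring
    rw [this] at h2
    exact h2
  have hHcont : Continuous H := (Real.continuous_exp.comp (continuous_const.mul continuous_id)).mul hGcont
  have hconst : ∀ t ∈ Icc (0:ℝ) T, H t = H 0 :=
    constant_of_has_deriv_right_zero hHcont.continuousOn
      (fun x hx => ((hHderiv x ⟨hx.1, le_of_lt hx.2⟩).hasDerivWithinAt))
  have hH0 : H 0 = 0 := by
    rw [hHdef]; simp [hGdef]
  intro t ht
  have hGt : G t = 0 := by
    have h := hconst t ht
    rw [hH0, hHdef] at h
    simp only at h
    have := Real.exp_ne_zero (lam * t)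
    exact by
      rcases mul_eq_zero.1 h with h' | h'
      · exact absurd h' this
      · exact h'
  rw [hDF t ht, hFG t ht, hGt, mul_zero]

private lemma stieltjes_finite (ℓ : StieltjesFunction ℝ) (a b : ℝ) :
    IsFiniteMeasure (ℓ.measure.restrict (Ioc a b)) := by
  constructor
  rw [Measure.restrict_apply_univ, ℓ.measure_Ioc]
  exact ENNReal.ofReal_lt_top

private lemma cont_intOn (ℓ : StieltjesFunction ℝ) {f : ℝ → ℝ} (hf : Continuous f) (a b : ℝ) :
    IntegrableOn f (Ioc a b) ℓ.measure :=
  (hf.continuousOn.integrableOn_compact isCompact_Icc).mono_set Ioc_subset_Icc_self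

private lemma Y_eq (lam y : ℝ) (hlam : 0 < lam) (ℓ : StieltjesFunction ℝ) (Y : ℝ → ℝ)
    (hY : ∀ t, Y t = y * Real.exp (-lam * t)
      + ∫ s in Ioc (0:ℝ) t, Real.exp (-lam * (t - s)) ∂ℓ.measure)
    (t : ℝ) (ht0 : 0 ≤ t) :
    Y t = y - lam * (∫ s in Ioc (0:ℝ) t, Y s) + (ℓ t - ℓ 0) := by
  haveI := stieltjes_finite ℓ 0 t
  haveI : IsFiniteMeasure (volume.restrict (Ioc (0:ℝ) t)) := by
    constructor
    rw [Measure.restrict_apply_univ, Real.volume_Ioc]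
    exact ENNReal.ofReal_lt_top
  set μt := ℓ.measure.restrict (Ioc (0:ℝ) t) with hμt
  set f : ℝ → ℝ → ℝ := fun s u => if u ≤ s then Real.exp (-lam * (s - u)) else 0 with hfdef
  -- inner identity
  have inner : ∀ s, s ≤ t →
      (∫ u, f s u ∂μt) = ∫ u in Ioc (0:ℝ) s, Real.exp (-lam * (s - u)) ∂ℓ.measure := by
    intro s hs
    have h1 : ∀ u, f s u = (Iic s).indicator (fun u => Real.exp (-lam * (s - u))) u := by
      intro u; simp [hfdef, Set.indicator_apply, Set.mem_Iic]
    simp_rw [h1]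
    rw [hμt, integral_indicator measurableSet_Iic,
      Measure.restrict_restrict measurableSet_Iic]
    congr 1
    rw [Set.inter_comm, Set.Ioc_inter_Iic, min_eq_right hs]
  -- measurability of uncurried f
  have hfmeas : Measurable (Function.uncurry f) := by
    have : Function.uncurry f = fun p : ℝ × ℝ =>
        if p.2 ≤ p.1 then Real.exp (-lam * (p.1 - p.2)) else 0 := rfl
    rw [this]
    exact Measurable.ite (measurableSet_le measurable_snd measurable_fst)
      ((Real.continuous_exp.comp
        ((continuous_const.mul ((continuous_fst.sub continuous_snd))))).measurable)
      measurable_const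
  -- integrability on the product
  have hfint : Integrable (Function.uncurry f)
      ((volume.restrict (Ioc (0:ℝ) t)).prod μt) := by
    refine Integrable.mono' (integrable_const 1) hfmeas.aestronglyMeasurable ?_
    filter_upwards with p
    rcases le_or_gt p.2 p.1 with h | h
    · have : Function.uncurry f p = Real.exp (-lam * (p.1 - p.2)) := if_pos h
      rw [this, Real.norm_eq_abs, abs_of_pos (Real.exp_pos _)]
      exact Real.exp_le_one_iff.2 (by nlinarith)
    · have : Function.uncurry f p = 0 := if_neg (not_le.2 h)
      rw [this]; simp
  -- rhs inner computation
  have rhs_inner : ∀ u ∈ Ioc (0:ℝ) t,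
      (∫ s in Ioc (0:ℝ) t, f s u) = (1 - Real.exp (-lam * (t - u))) / lam := by
    intro u hu
    have h1 : ∀ s, f s u = (Ici u).indicator (fun s => Real.exp (-lam * (s - u))) s := by
      intro s; simp [hfdef, Set.indicator_apply, Set.mem_Ici]
    simp_rw [h1]
    rw [integral_indicator measurableSet_Ici,
      Measure.restrict_restrict measurableSet_Ici]
    have hset : Ici u ∩ Ioc (0:ℝ) t = Icc u t := by
      ext x
      simp only [Set.mem_inter_iff, Set.mem_Ici, Set.mem_Ioc, Set.mem_Icc]
      constructor
      · rintro ⟨h1', h2', h3'⟩; exact ⟨h1', h3'⟩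
      · rintro ⟨h1', h2'⟩; exact ⟨h1', lt_of_lt_of_le hu.1 h1', h2'⟩
    rw [hset, integral_Icc_eq_integral_Ioc, ← intervalIntegral.integral_of_le hu.2]
    have h2 : ∀ s, Real.exp (-lam * (s - u)) = Real.exp (lam * u) * Real.exp (-lam * s) := by
      intro s; rw [← Real.exp_add]; ring_nf
    simp_rw [h2]
    rw [intervalIntegral.integral_const_mul, int_exp_helper (-lam) u t (neg_ne_zero.2 hlam.ne')]
    have e1 : Real.exp (lam * u) * Real.exp (-lam * t) = Real.exp (-lam * (t - u)) := by
      rw [← Real.exp_add]; ring_nf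
    have e2 : Real.exp (lam * u) * Real.exp (-lam * u) = 1 := by
      rw [← Real.exp_add, show lam * u + -lam * u = 0 by ring, Real.exp_zero]
    rw [show Real.exp (lam * u) * ((Real.exp (-lam * t) - Real.exp (-lam * u)) / -lam)
        = (Real.exp (lam * u) * Real.exp (-lam * u) - Real.exp (lam * u) * Real.exp (-lam * t))
          / lam from by field_simp [hlam.ne']; ring, e2]
  -- compute the integral of Y
  have hIoc_int_exp : IntegrableOn (fun s => y * Real.exp (-lam * s)) (Ioc (0:ℝ) t) :=
    Continuous.integrableOn_Ioc
      (continuous_const.mul (Real.continuous_exp.comp (continuous_const.mul continuous_id)))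
  have hinner_int : IntegrableOn (fun s => ∫ u, f s u ∂μt) (Ioc (0:ℝ) t) := by
    have := hfint.integral_prod_left
    exact this
  have expand : ∀ s ∈ Ioc (0:ℝ) t,
      Y s = y * Real.exp (-lam * s) + ∫ u, f s u ∂μt := by
    intro s hs
    rw [hY s, inner s hs.2]
  have step1 : (∫ s in Ioc (0:ℝ) t, Y s)
      = y * (∫ s in Ioc (0:ℝ) t, Real.exp (-lam * s))
        + ∫ s in Ioc (0:ℝ) t, (∫ u, f s u ∂μt) := by
    rw [setIntegral_congr_fun measurableSet_Ioc expand,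
      integral_add hIoc_int_exp hinner_int, integral_const_mul]
  have step2 : (∫ s in Ioc (0:ℝ) t, (∫ u, f s u ∂μt))
      = ∫ u, (∫ s in Ioc (0:ℝ) t, f s u) ∂μt := integral_integral_swap hfint
  have hexp_int : IntegrableOn (fun u => Real.exp (-lam * (t - u))) (Ioc (0:ℝ) t) ℓ.measure :=
    cont_intOn ℓ (Real.continuous_exp.comp
      (continuous_const.mul (continuous_const.sub continuous_id))) 0 t
  have hℓ0t : (0:ℝ) ≤ ℓ t - ℓ 0 := sub_nonneg.2 (ℓ.mono ht0)
  have step3 : (∫ u, (∫ s in Ioc (0:ℝ) t, f s u) ∂μt)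
      = ((ℓ t - ℓ 0) - ∫ u in Ioc (0:ℝ) t, Real.exp (-lam * (t - u)) ∂ℓ.measure) / lam := by
    rw [hμt, setIntegral_congr_fun measurableSet_Ioc rhs_inner]
    simp_rw [sub_div]
    rw [integral_sub ((integrable_const _).div_const lam) (hexp_int.div_const lam)]
    rw [integral_div, integral_div, setIntegral_const]
    rw [Measure.real, ℓ.measure_Ioc, ENNReal.toReal_ofReal hℓ0t]
    simp only [smul_eq_mul]
    ring
  have step4 : (∫ s in Ioc (0:ℝ) t, Real.exp (-lam * s)) = (1 - Real.exp (-lam * t)) / lam := by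
    rw [← intervalIntegral.integral_of_le ht0]
    have h2 : ∀ s : ℝ, Real.exp (-lam * s) = Real.exp (-lam * s) := fun _ => rfl
    rw [int_exp_helper (-lam) 0 t (neg_ne_zero.2 hlam.ne')]
    rw [mul_zero, Real.exp_zero]
    ring
  have hYt := hY t
  have hItail : (∫ u in Ioc (0:ℝ) t, Real.exp (-lam * (t - u)) ∂ℓ.measure)
      = Y t - y * Real.exp (-lam * t) := by rw [hYt]; ring
  rw [step1, step2, step3, step4, hItail]
  field_simp
  ring


/-- Pathwise uniqueness for the non-Gaussian OU integral equation: any Borel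
measurable, Lebesgue-integrable `Z` on `[0,T]` satisfying
`Z t = y - λ ∫₀ᵗ Z(s) ds + (ℓ t - ℓ 0)` on `[0,T]` coincides on `[0,T]` with
`Y t = y e^{-λ t} + ∫_{(0,t]} e^{-λ(t-s)} dμ_ℓ(s)`. -/
theorem stmt_1 (lam T y : ℝ) (hlam : 0 < lam) (hT : 0 < T) (hy : 0 ≤ y)
    (ℓ : StieltjesFunction ℝ)
    (Y Z : ℝ → ℝ)
    (hY : ∀ t, Y t = y * Real.exp (-lam * t)
      + ∫ s in Ioc (0:ℝ) t, Real.exp (-lam * (t - s)) ∂ℓ.measure)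
    (hZmeas : Measurable Z)
    (hZint : IntegrableOn Z (Icc (0:ℝ) T))
    (hZ : ∀ t ∈ Icc (0:ℝ) T,
      Z t = y - lam * (∫ s in Ioc (0:ℝ) t, Z s) + (ℓ t - ℓ 0)) :
    ∀ t ∈ Icc (0:ℝ) T, Z t = Y t := by
  -- measurability and integrability of Y
  set g : ℝ → ℝ := fun t => ∫ u in Ioc (0:ℝ) t, Real.exp (lam * u) ∂ℓ.measure with hgdef
  have hexpint : ∀ b : ℝ, IntegrableOn (fun u => Real.exp (lam * u)) (Ioc (0:ℝ) b) ℓ.measure :=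
    fun b => cont_intOn ℓ (Real.continuous_exp.comp (continuous_const.mul continuous_id)) 0 b
  have hgmono : Monotone g := by
    intro t₁ t₂ h12
    refine setIntegral_mono_set (hexpint t₂) ?_ ?_
    · filter_upwards with u using (Real.exp_pos _).le
    · exact HasSubset.Subset.eventuallyLE (Ioc_subset_Ioc_right h12)
  have hgnonneg : ∀ s, 0 ≤ g s := fun s =>
    setIntegral_nonneg measurableSet_Ioc (fun u _ => (Real.exp_pos _).le)
  have hgmeas : Measurable g := hgmono.measurable
  have hYg : ∀ s, Y s = Real.exp (-lam * s) * (y + g s) := by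
    intro s
    rw [hY s, hgdef]
    have h2 : ∀ u, Real.exp (-lam * (s - u)) = Real.exp (-lam * s) * Real.exp (lam * u) := by
      intro u; rw [← Real.exp_add]; ring_nf
    simp_rw [h2]
    rw [integral_const_mul]
    ring
  have hYmeas : Measurable Y := by
    have : Y = fun s => Real.exp (-lam * s) * (y + g s) := funext hYg
    rw [this]
    exact ((Real.continuous_exp.comp (continuous_const.mul continuous_id)).measurable).mul
      (measurable_const.add hgmeas)
  have hYint : IntegrableOn Y (Icc (0:ℝ) T) := by
    refine Integrable.mono' (integrable_const (y + g T))
      hYmeas.aestronglyMeasurable.restrict ?_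
    filter_upwards [ae_restrict_mem measurableSet_Icc] with s hs
    rw [hYg s, Real.norm_eq_abs,
      abs_of_nonneg (mul_nonneg (Real.exp_pos _).le (by positivity))]
    have h1 : Real.exp (-lam * s) ≤ 1 :=
      Real.exp_le_one_iff.2 (by nlinarith [hs.1])
    have h3 : g s ≤ g T := hgmono hs.2
    nlinarith [Real.exp_pos (-lam * s), hgnonneg s]
  -- the difference satisfies the homogeneous equation
  have hDint : IntegrableOn (fun s => Z s - Y s) (Icc (0:ℝ) T) := hZint.sub hYint
  have hEq : ∀ t ∈ Icc (0:ℝ) T,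
      (fun s => Z s - Y s) t = -lam * ∫ s in Ioc (0:ℝ) t, (Z s - Y s) := by
    intro t ht
    have hsub : Ioc (0:ℝ) t ⊆ Icc (0:ℝ) T :=
      Set.Ioc_subset_Icc_self.trans (Set.Icc_subset_Icc_right ht.2)
    have hZI : IntegrableOn Z (Ioc (0:ℝ) t) := hZint.mono_set hsub
    have hYI : IntegrableOn Y (Ioc (0:ℝ) t) := hYint.mono_set hsub
    simp only
    rw [integral_sub hZI hYI, hZ t ht, Y_eq lam y hlam ℓ Y hY t ht.1]
    ring
  have := gronwall_zero lam T (fun s => Z s - Y s) hDint hEq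
  intro t ht
  have h := this t ht
  simpa [sub_eq_zero] using h
end

section
/- Cubic growth of the partial derivatives of ρ: under conditions C1 and C2 the function ρ is differentiable on the interior of S and there exist nonnegative constants Ā₁, Ā₂, Ā₃, Ā₄, depending only on d, r, K and the constants in C1 and C2, such that for every i ∈ {1,…,h} and every y in the interior of S, |∂ρ(y)/∂y_i| ≤ Ā₁ + Ā₂‖y‖ + Ā₃‖y‖² + Ā₄‖y‖³. -/
open Matrix

/-- Cubic growth of the partial derivatives of `ρ`: under conditions C1 and C2
the function `ρ(y) = B(y)ᵀ(σ(y)σ(y)ᵀ)⁻¹B(y)` is differentiable on the interior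
of `S` and its partial derivatives satisfy
`|∂ρ/∂yᵢ| ≤ Ā₁ + Ā₂‖y‖ + Ā₃‖y‖² + Ā₄‖y‖³` for nonnegative constants `Āⱼ`. -/
theorem stmt_11 (d h : ℕ) (hd : 0 < d) (hh : 0 < h)
    (Sset : Set (Fin h → ℝ)) (K : ℝ) (hK : 0 < K)
    (hSK : ∀ y ∈ Sset, K ≤ ‖y‖)
    (r : ℝ) (hr : 0 ≤ r)
    (b : (Fin h → ℝ) → Fin d → ℝ)
    (σ : (Fin h → ℝ) → Matrix (Fin d) (Fin d) ℝ)
    (Ab Bb Aσ Bσ bσ : ℝ)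
    (hAb : 0 ≤ Ab) (hBb : 0 ≤ Bb) (hAσ : 0 ≤ Aσ) (hBσ : 0 ≤ Bσ) (hbσ : 0 < bσ)
    (hinv : ∀ y ∈ Sset, IsUnit (σ y * (σ y)ᵀ))
    (hb : ∀ y ∈ Sset, ∀ i, |b y i| ≤ Ab + Bb * ‖y‖)
    (hσ : ∀ y ∈ Sset, ∀ m n, |(σ y * (σ y)ᵀ) m n| ≤ Aσ + Bσ * ‖y‖)
    (hσinv : ∀ y ∈ Sset, ∀ m n, |((σ y * (σ y)ᵀ)⁻¹) m n| ≤ 1 / (bσ * ‖y‖))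
    -- Condition C2:
    (hne : (interior Sset).Nonempty)
    (Abb Bbb Abσ Bbσ : ℝ)
    (hAbb : 0 ≤ Abb) (hBbb : 0 ≤ Bbb) (hAbσ : 0 ≤ Abσ) (hBbσ : 0 ≤ Bbσ)
    (hbdiff : ∀ y ∈ interior Sset, DifferentiableAt ℝ b y)
    (hbderiv : ∀ y ∈ interior Sset, ∀ i : Fin h,
      ‖fderiv ℝ b y (Pi.single i 1)‖ ≤ Abb + Bbb * ‖y‖)
    (hMdiff : ∀ y ∈ interior Sset, ∀ m n : Fin d,
      DifferentiableAt ℝ (fun z => ((σ z * (σ z)ᵀ)⁻¹) m n) y)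
    (hMderiv : ∀ y ∈ interior Sset, ∀ i : Fin h, ∀ m n : Fin d,
      |fderiv ℝ (fun z => ((σ z * (σ z)ᵀ)⁻¹) m n) y (Pi.single i 1)|
        ≤ Abσ + Bbσ * ‖y‖) :
    ∃ A₁ A₂ A₃ A₄ : ℝ, 0 ≤ A₁ ∧ 0 ≤ A₂ ∧ 0 ≤ A₃ ∧ 0 ≤ A₄ ∧
      ∀ y ∈ interior Sset,
        DifferentiableAt ℝ
          (fun z => (fun i => b z i - r) ⬝ᵥ
            ((σ z * (σ z)ᵀ)⁻¹ *ᵥ (fun i => b z i - r))) y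
        ∧ ∀ i : Fin h,
            |fderiv ℝ
              (fun z => (fun i => b z i - r) ⬝ᵥ
                ((σ z * (σ z)ᵀ)⁻¹ *ᵥ (fun i => b z i - r))) y (Pi.single i 1)|
              ≤ A₁ + A₂ * ‖y‖ + A₃ * ‖y‖ ^ 2 + A₄ * ‖y‖ ^ 3 := by

  classical
  have hC0 : (0:ℝ) ≤ Ab + r := add_nonneg hAb hr
  have hbK : (0:ℝ) < bσ * K := mul_pos hbσ hK
  have hbK0 : (0:ℝ) ≤ bσ * K := hbK.le
  have hd2 : (0:ℝ) ≤ (d:ℝ) * (d:ℝ) := mul_nonneg (Nat.cast_nonneg d) (Nat.cast_nonneg d)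
  refine ⟨(d:ℝ)*(d:ℝ) * (2*(Abb*(Ab+r))/(bσ*K) + (Ab+r)^2*Abσ),
    (d:ℝ)*(d:ℝ) * (2*(Abb*Bb + Bbb*(Ab+r))/(bσ*K) + ((Ab+r)^2*Bbσ + 2*(Ab+r)*Bb*Abσ)),
    (d:ℝ)*(d:ℝ) * (2*(Bbb*Bb)/(bσ*K) + (2*(Ab+r)*Bb*Bbσ + Bb^2*Abσ)),
    (d:ℝ)*(d:ℝ) * (Bb^2*Bbσ),
    mul_nonneg hd2 (add_nonneg (div_nonneg (mul_nonneg (by norm_num) (mul_nonneg hAbb hC0)) hbK0)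
      (mul_nonneg (pow_nonneg hC0 2) hAbσ)),
    mul_nonneg hd2 (add_nonneg (div_nonneg (mul_nonneg (by norm_num)
        (add_nonneg (mul_nonneg hAbb hBb) (mul_nonneg hBbb hC0))) hbK0)
      (add_nonneg (mul_nonneg (pow_nonneg hC0 2) hBbσ)
        (mul_nonneg (mul_nonneg (mul_nonneg (by norm_num) hC0) hBb) hAbσ))),
    mul_nonneg hd2 (add_nonneg (div_nonneg (mul_nonneg (by norm_num) (mul_nonneg hBbb hBb)) hbK0)
      (add_nonneg (mul_nonneg (mul_nonneg (mul_nonneg (by norm_num) hC0) hBb) hBbσ)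
        (mul_nonneg (pow_nonneg hBb 2) hAbσ))),
    mul_nonneg hd2 (mul_nonneg (pow_nonneg hBb 2) hBbσ), ?_⟩
  intro y hy
  have hyS : y ∈ Sset := interior_subset hy
  have hKy : K ≤ ‖y‖ := hSK y hyS
  have hy0 : (0:ℝ) < ‖y‖ := lt_of_lt_of_le hK hKy
  set t : ℝ := ‖y‖ with ht
  set M : (Fin h → ℝ) → Matrix (Fin d) (Fin d) ℝ := fun z => (σ z * (σ z)ᵀ)⁻¹ with hMdef
  set Db : (Fin h → ℝ) →L[ℝ] (Fin d → ℝ) := fderiv ℝ b y with hDb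
  set DM : Fin d → Fin d → ((Fin h → ℝ) →L[ℝ] ℝ) :=
    fun m n => fderiv ℝ (fun z => M z m n) y with hDM
  -- derivatives of components of B
  have hBm : ∀ m : Fin d, HasFDerivAt (fun z => b z m - r)
      ((ContinuousLinearMap.proj m).comp Db) y := by
    intro m
    have h1 := (hbdiff y hy).hasFDerivAt
    have h2 := ((ContinuousLinearMap.proj (R := ℝ) (φ := fun _ : Fin d => ℝ) m)).hasFDerivAt.comp
      y h1
    simpa [Function.comp] using h2.sub_const r
  have hMmn : ∀ m n : Fin d, HasFDerivAt (fun z => M z m n) (DM m n) y :=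
    fun m n => (hMdiff y hy m n).hasFDerivAt
  -- derivative of each product term
  set D : Fin d → Fin d → ((Fin h → ℝ) →L[ℝ] ℝ) := fun m n =>
    (b y m - r) • (M y m n • ((ContinuousLinearMap.proj n).comp Db) + (b y n - r) • DM m n)
      + (M y m n * (b y n - r)) • ((ContinuousLinearMap.proj m).comp Db) with hD
  have hterm : ∀ m n : Fin d,
      HasFDerivAt (fun z => (b z m - r) * (M z m n * (b z n - r))) (D m n) y := by
    intro m n
    exact (hBm m).mul ((hMmn m n).mul (hBm n))
  have htotal : HasFDerivAt (fun z => ∑ m : Fin d, ∑ n : Fin d,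
      (b z m - r) * (M z m n * (b z n - r))) (∑ m : Fin d, ∑ n : Fin d, D m n) y := by
    refine HasFDerivAt.fun_sum fun m _ => HasFDerivAt.fun_sum fun n _ => hterm m n
  have hfun : (fun z => (fun i => b z i - r) ⬝ᵥ
      ((σ z * (σ z)ᵀ)⁻¹ *ᵥ (fun i => b z i - r))) = fun z => ∑ m : Fin d, ∑ n : Fin d,
      (b z m - r) * (M z m n * (b z n - r)) := by
    funext z
    simp [hMdef, dotProduct, mulVec, Finset.mul_sum]
  rw [hfun]
  refine ⟨htotal.differentiableAt, ?_⟩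
  intro i
  rw [htotal.fderiv]
  -- bounds on the pieces
  set CB : ℝ := (Ab + r) + Bb * t with hCB
  set CM : ℝ := 1 / (bσ * K) with hCM
  set CB' : ℝ := Abb + Bbb * t with hCB'
  set CM' : ℝ := Abσ + Bbσ * t with hCM'
  have ht0 : (0:ℝ) ≤ t := hy0.le
  have hCB0 : 0 ≤ CB := add_nonneg hC0 (mul_nonneg hBb ht0)
  have hCM0 : 0 ≤ CM := by positivity
  have hCB'0 : 0 ≤ CB' := add_nonneg hAbb (mul_nonneg hBbb ht0)
  have hCM'0 : 0 ≤ CM' := add_nonneg hAbσ (mul_nonneg hBbσ ht0)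
  have hbB : ∀ m : Fin d, |b y m - r| ≤ CB := by
    intro m
    have h1 : |b y m - r| ≤ |b y m| + |r| := abs_sub _ _
    have h2 := hb y hyS m
    rw [abs_of_nonneg hr] at h1
    calc |b y m - r| ≤ |b y m| + r := h1
      _ ≤ (Ab + Bb * t) + r := by linarith
      _ = CB := by rw [hCB]; ring
  have hMb : ∀ m n : Fin d, |M y m n| ≤ CM := by
    intro m n
    refine (hσinv y hyS m n).trans ?_
    rw [hCM]
    exact one_div_le_one_div_of_le hbK (mul_le_mul_of_nonneg_left hKy hbσ.le)
  set v : Fin h → ℝ := Pi.single i 1 with hv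
  have hDbv : ∀ m : Fin d, |Db v m| ≤ CB' := by
    intro m
    have h1 : ‖Db v m‖ ≤ ‖Db v‖ := norm_le_pi_norm (Db v) m
    rw [Real.norm_eq_abs] at h1
    exact h1.trans (hbderiv y hy i)
  have hDMv : ∀ m n : Fin d, |DM m n v| ≤ CM' := fun m n => hMderiv y hy i m n
  have hDbound : ∀ m n : Fin d, |(D m n) v| ≤ CB * (CM * CB' + CB * CM') + (CM * CB) * CB' := by
    intro m n
    have e : (D m n) v = (b y m - r) * (M y m n * Db v n + (b y n - r) * DM m n v)
        + (M y m n * (b y n - r)) * Db v m := by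
      simp [hD, ContinuousLinearMap.add_apply, ContinuousLinearMap.smul_apply,
        ContinuousLinearMap.comp_apply, smul_eq_mul]
      ring
    rw [e]
    refine (abs_add_le _ _).trans (add_le_add ?_ ?_)
    · rw [abs_mul]
      refine mul_le_mul (hbB m) ?_ (abs_nonneg _)
        hCB0
      refine (abs_add_le _ _).trans (add_le_add ?_ ?_)
      · rw [abs_mul]
        exact mul_le_mul (hMb m n) (hDbv n) (abs_nonneg _) hCM0
      · rw [abs_mul]
        exact mul_le_mul (hbB n) (hDMv m n) (abs_nonneg _) hCB0
    · rw [abs_mul, abs_mul]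
      exact mul_le_mul (mul_le_mul (hMb m n) (hbB n) (abs_nonneg _) hCM0)
        (hDbv m) (abs_nonneg _) (mul_nonneg hCM0 hCB0)
  have hsum : |(∑ m : Fin d, ∑ n : Fin d, D m n) v|
      ≤ (d:ℝ) * (d:ℝ) * (CB * (CM * CB' + CB * CM') + (CM * CB) * CB') := by
    have e : (∑ m : Fin d, ∑ n : Fin d, D m n) v = ∑ m : Fin d, ∑ n : Fin d, (D m n) v := by
      simp [ContinuousLinearMap.sum_apply]
    rw [e]
    calc |∑ m : Fin d, ∑ n : Fin d, (D m n) v|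
        ≤ ∑ m : Fin d, |∑ n : Fin d, (D m n) v| := Finset.abs_sum_le_sum_abs _ _
      _ ≤ ∑ m : Fin d, ∑ n : Fin d, |(D m n) v| :=
          Finset.sum_le_sum fun m _ => Finset.abs_sum_le_sum_abs _ _
      _ ≤ ∑ _m : Fin d, ∑ _n : Fin d, (CB * (CM * CB' + CB * CM') + (CM * CB) * CB') :=
          Finset.sum_le_sum fun m _ => Finset.sum_le_sum fun n _ => hDbound m n
      _ = (d:ℝ) * (d:ℝ) * (CB * (CM * CB' + CB * CM') + (CM * CB) * CB') := by
          simp [Finset.sum_const, Finset.card_univ]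
          ring
  refine hsum.trans ?_
  have hbKne : bσ * K ≠ 0 := ne_of_gt hbK
  have : (d:ℝ) * (d:ℝ) * (CB * (CM * CB' + CB * CM') + (CM * CB) * CB')
      = (d:ℝ)*(d:ℝ) * (2*(Abb*(Ab+r))/(bσ*K) + (Ab+r)^2*Abσ)
        + (d:ℝ)*(d:ℝ) * (2*(Abb*Bb + Bbb*(Ab+r))/(bσ*K) + ((Ab+r)^2*Bbσ + 2*(Ab+r)*Bb*Abσ)) * t
        + (d:ℝ)*(d:ℝ) * (2*(Bbb*Bb)/(bσ*K) + (2*(Ab+r)*Bb*Bbσ + Bb^2*Abσ)) * t^2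
        + (d:ℝ)*(d:ℝ) * (Bb^2*Bbσ) * t^3 := by
    rw [hCB, hCM, hCB', hCM']
    field_simp
    ring
  rw [this]
end
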